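/- Let χ: ℤ → ℂ be a nontrivial Dirichlet character mod N (or any N-periodic function with vanishing period sum). For real s with s > -1, the limit lim_{l→∞} (1/l) ∑_{k=1}^{l} (l+1-k)·χ(k)·k^{-s} exists (as a finite complex number). -/

import Mathlib

open Filter Finset Topology

/-- Telescoping summation-by-parts identity. -/
lemma abel_tele (u v : ℕ → ℂ) (l : ℕ) :
    ∑ k ∈ Finset.range l, (u (k+1) - u k) * v (k+1)
      = u l * v (l+1) - u 0 * v 1
        - ∑ k ∈ Finset.range l, u (k+1) * (v (k+2) - v (k+1)) := by
  induction l with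
  | zero => simp
  | succ n ih =>
      rw [Finset.sum_range_succ, Finset.sum_range_succ (f := fun k => u (k+1) * (v (k+2) - v (k+1))), ih]
      ring

lemma tele_weight (x : ℕ → ℝ) (l : ℕ) :
    ∑ k ∈ Finset.range l, ((k:ℝ)+1) * (x k - x (k+1))
      = ∑ k ∈ Finset.range l, x k - (l:ℝ) * x l := by
  induction l with
  | zero => simp
  | succ n ih =>
      rw [Finset.sum_range_succ, Finset.sum_range_succ (f := x), ih]
      push_cast; ring

/-- Abel-type identity relating `P`-weighted differences to the original series. -/
lemma lemA (a P F : ℕ → ℂ) (cbar : ℂ) (hP : ∀ k, P (k+1) = P k + a k)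
    (hP0 : P 0 = -cbar) (hF1 : F 1 = 1) (l : ℕ) :
    ∑ k ∈ Finset.range l, P (k+1) * (F (k+1) - F (k+2))
      = ∑ k ∈ Finset.range l, a k * F (k+1) - cbar - P l * F (l+1) := by
  induction l with
  | zero => simp [hP0, hF1]
  | succ n ih =>
      rw [Finset.sum_range_succ, Finset.sum_range_succ (f := fun k => a k * F (k+1)), ih, hP n]
      ring

/-- Master identity for the weighted Cesàro sums. -/
lemma masterId (a P F : ℕ → ℂ) (cbar : ℂ) (hP : ∀ k, P (k+1) = P k + a k)
    (hP0 : P 0 = -cbar) (hF1 : F 1 = 1) (l : ℕ) :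
    ∑ k ∈ Finset.range l, ((l:ℂ) + 1 - ((k:ℂ)+1)) * a k * F (k+1)
      = (l:ℂ) * cbar + ∑ k ∈ Finset.range l, P (k+1) * F (k+1)
        + ∑ k ∈ Finset.range l, ((l:ℂ) - ((k:ℂ)+1)) * (P (k+1) * (F (k+1) - F (k+2))) := by
  induction l with
  | zero => simp
  | succ n ih =>
      have key1 : ∀ k ∈ Finset.range (n+1),
          ((↑(n+1):ℂ) + 1 - ((k:ℂ)+1)) * a k * F (k+1)
            = ((n:ℂ) + 1 - ((k:ℂ)+1)) * a k * F (k+1) + a k * F (k+1) := by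
        intro k _; push_cast; ring
      have key2 : ∀ k ∈ Finset.range (n+1),
          ((↑(n+1):ℂ) - ((k:ℂ)+1)) * (P (k+1) * (F (k+1) - F (k+2)))
            = ((n:ℂ) - ((k:ℂ)+1)) * (P (k+1) * (F (k+1) - F (k+2)))
              + P (k+1) * (F (k+1) - F (k+2)) := by
        intro k _; push_cast; ring
      rw [Finset.sum_congr rfl key1, Finset.sum_congr rfl key2,
        Finset.sum_add_distrib, Finset.sum_add_distrib,
        Finset.sum_range_succ (f := fun k => ((n:ℂ) + 1 - ((k:ℂ)+1)) * a k * F (k+1)),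
        Finset.sum_range_succ (f := fun k => ((n:ℂ) - ((k:ℂ)+1)) * (P (k+1) * (F (k+1) - F (k+2)))),
        Finset.sum_range_succ (f := fun k => P (k+1) * F (k+1)),
        ih, lemA a P F cbar hP hP0 hF1 (n+1),
        Finset.sum_range_succ (f := fun k => a k * F (k+1))]
      push_cast
      ring

/-- Mean value theorem for `x ^ (-s)` on `[k+1, k+2]`. -/
lemma rpow_mvt (s : ℝ) (k : ℕ) :
    ∃ c : ℝ, (((k:ℝ)+1 < c ∧ c < (k:ℝ)+2) ∧
      ((k:ℝ)+1) ^ (-s) - ((k:ℝ)+2) ^ (-s) = s * c ^ (-s-1)) := by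
  have h01 : (0:ℝ) < (k:ℝ)+1 := by positivity
  have hab : (k:ℝ)+1 < (k:ℝ)+2 := by linarith
  have hcont : ContinuousOn (fun x : ℝ => x ^ (-s)) (Set.Icc ((k:ℝ)+1) ((k:ℝ)+2)) := by
    intro x hx
    exact (Real.continuousAt_rpow_const x (-s)
      (Or.inl (ne_of_gt (lt_of_lt_of_le h01 hx.1)))).continuousWithinAt
  have hderiv : ∀ x ∈ Set.Ioo ((k:ℝ)+1) ((k:ℝ)+2),
      HasDerivAt (fun x : ℝ => x ^ (-s)) (-s * x ^ (-s-1)) x := by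
    intro x hx
    exact Real.hasDerivAt_rpow_const (Or.inl (ne_of_gt (lt_trans h01 hx.1)))
  obtain ⟨c, hc, he⟩ := exists_hasDerivAt_eq_slope (fun x : ℝ => x ^ (-s))
    (fun x => -s * x ^ (-s-1)) hab hcont hderiv
  refine ⟨c, ⟨hc.1, hc.2⟩, ?_⟩
  have hb : ((k:ℝ)+2) - ((k:ℝ)+1) = 1 := by ring
  rw [hb, div_one] at he
  linarith [he]

lemma window_per (f : ℕ → ℂ) (N : ℕ) (hf : ∀ k, f (k + N) = f k) :
    ∀ m, ∑ j ∈ Finset.range N, f (m + j) = ∑ j ∈ Finset.range N, f j := by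
  intro m
  induction m with
  | zero => simp
  | succ n ih =>
      have h2 := Finset.sum_range_succ' (fun j => f (n + j)) N
      have h3 := Finset.sum_range_succ (fun j => f (n + j)) N
      simp only [Nat.add_zero] at h2
      have e : ∑ j ∈ Finset.range N, f (n + 1 + j) = ∑ j ∈ Finset.range N, f (n + (j + 1)) :=
        Finset.sum_congr rfl fun j _ => by congr 1; omega
      have hpe : f (n + N) = f n := hf n
      rw [e, ← ih]
      linear_combination h3 - h2 + hpe

lemma bdd_of_periodic (Q : ℕ → ℂ) (N : ℕ) (hN : 0 < N) (hQ : ∀ m, Q (m + N) = Q m) :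
    ∃ M : ℝ, 0 ≤ M ∧ ∀ m, ‖Q m‖ ≤ M := by
  have key : ∀ q r, Q (r + q * N) = Q r := by
    intro q
    induction q with
    | zero => intro r; simp
    | succ n ih =>
        intro r
        have e : r + (n + 1) * N = (r + n * N) + N := by ring
        rw [e, hQ, ih]
  refine ⟨∑ j ∈ Finset.range N, ‖Q j‖,
    Finset.sum_nonneg fun j _ => norm_nonneg _, fun m => ?_⟩
  have e : Q m = Q (m % N) := by
    conv_lhs => rw [← Nat.mod_add_div' m N]
    exact key _ _
  rw [e]
  exact Finset.single_le_sum (f := fun j => ‖Q j‖) (fun i _ => norm_nonneg _)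
    (Finset.mem_range.mpr (Nat.mod_lt m hN))

lemma tendsto_aux1 (s : ℝ) (hs : -1 < s) :
    Tendsto (fun l : ℕ => ((l:ℝ) + 1) ^ (-s - 1)) atTop (𝓝 0) := by
  have h := tendsto_rpow_neg_atTop (y := s + 1) (by linarith)
  have hcomp : Tendsto (fun l : ℕ => (l:ℝ) + 1) atTop atTop :=
    tendsto_atTop_add_const_right atTop 1 tendsto_natCast_atTop_atTop
  have h2 := h.comp hcomp
  simpa [Function.comp_def, show -(s + 1) = -s - 1 by ring] using h2

lemma tendsto_aux2 (s : ℝ) (hs : -1 < s) :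
    Tendsto (fun l : ℕ => ((l:ℝ) + 1) ^ (-s) / l) atTop (𝓝 0) := by
  apply squeeze_zero' (g := fun l : ℕ => 2 * ((l:ℝ) + 1) ^ (-s - 1))
  · filter_upwards with l; positivity
  · filter_upwards [eventually_ge_atTop 1] with l hl
    have hl1 : (1:ℝ) ≤ (l:ℝ) := by exact_mod_cast hl
    have hlpos : (0:ℝ) < (l:ℝ) := by linarith
    have hsplit : ((l:ℝ) + 1) ^ (-s - 1) * ((l:ℝ) + 1) = ((l:ℝ) + 1) ^ (-s) := by
      have h := Real.rpow_add (show (0:ℝ) < (l:ℝ) + 1 by positivity) (-s - 1) 1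
      rw [Real.rpow_one] at h
      rw [← h]; ring_nf
    rw [← hsplit]
    have h2 : ((l:ℝ) + 1) ≤ 2 * l := by linarith
    have hnn : (0:ℝ) ≤ ((l:ℝ) + 1) ^ (-s - 1) := Real.rpow_nonneg (by positivity) _
    calc ((l:ℝ) + 1) ^ (-s - 1) * ((l:ℝ) + 1) / l
        ≤ ((l:ℝ) + 1) ^ (-s - 1) * (2 * l) / l := by gcongr
      _ = 2 * ((l:ℝ) + 1) ^ (-s - 1) := by field_simp
  · simpa using (tendsto_aux1 s hs).const_mul 2
/-- For an `N`-periodic `χ : ℤ → ℂ` with vanishing period sum and real `s > -1`, the Cesàro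
means `(1/l) ∑_{k=1}^{l} (l+1-k)·χ(k)·k^{-s}` converge. -/
theorem cesaro_means_converge (N : ℕ) (hN : 0 < N) (χ : ℤ → ℂ)
    (hper : ∀ j : ℤ, χ (j + N) = χ j)
    (hsum : ∑ a ∈ Finset.range N, χ (a + 1) = 0)
    (s : ℝ) (hs : -1 < s) :
    ∃ L : ℂ, Tendsto (fun l : ℕ => (1 / (l : ℂ)) *
        ∑ k ∈ Finset.range l, ((l : ℂ) + 1 - ((k : ℂ) + 1)) * χ (k + 1)
          * (((((k : ℝ) + 1) ^ (-s) : ℝ)) : ℂ))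
      atTop (nhds L) := by
  have hs1 : -s - 1 ≤ 0 := by linarith
  -- MVT data for the increments of `k ↦ k ^ (-s)`
  choose ξ hξ hgE using rpow_mvt s
  have hξpos : ∀ k, 0 < ξ k := fun k => lt_trans (by positivity) (hξ k).1
  have hudec : ∀ k, ξ (k+1) ^ (-s-1) ≤ ξ k ^ (-s-1) := by
    intro k
    have h1 : ξ (k+1) ^ (-s-1) ≤ ((k:ℝ)+2) ^ (-s-1) := by
      apply Real.rpow_le_rpow_of_nonpos (by positivity) _ hs1
      have h := (hξ (k+1)).1
      push_cast at h
      linarith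
    have h2 : ((k:ℝ)+2) ^ (-s-1) ≤ ξ k ^ (-s-1) :=
      Real.rpow_le_rpow_of_nonpos (hξpos k) (le_of_lt (hξ k).2) hs1
    linarith
  set x : ℕ → ℝ := fun k => |s| * ξ k ^ (-s-1) with hxdef
  have hxnn : ∀ k, 0 ≤ x k := fun k =>
    mul_nonneg (abs_nonneg s) (Real.rpow_nonneg (hξpos k).le _)
  have hxdec : ∀ k, x (k+1) ≤ x k := fun k =>
    mul_le_mul_of_nonneg_left (hudec k) (abs_nonneg s)
  have hxle : ∀ k, x k ≤ |s| * (((k:ℝ)+1) ^ (-s-1)) := fun k =>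
    mul_le_mul_of_nonneg_left
      (Real.rpow_le_rpow_of_nonpos (by positivity) (hξ k).1.le hs1) (abs_nonneg s)
  have hxto0 : Tendsto x atTop (𝓝 0) := by
    apply squeeze_zero (fun k => hxnn k) hxle
    simpa using (tendsto_aux1 s hs).const_mul |s|
  have hcesaro : Tendsto (fun l : ℕ => (l:ℝ)⁻¹ * ∑ k ∈ Finset.range l, x k) atTop (𝓝 0) := by
    simpa using hxto0.cesaro
  have hcesaro' : Tendsto (fun l : ℕ => (l:ℝ)⁻¹ * ∑ k ∈ Finset.range (l+1), x k)
      atTop (𝓝 0) := by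
    apply squeeze_zero'
      (g := fun l : ℕ => 2 * ((((l+1:ℕ)):ℝ)⁻¹ * ∑ k ∈ Finset.range (l+1), x k))
    · filter_upwards with l
      exact mul_nonneg (by positivity) (Finset.sum_nonneg fun k _ => hxnn k)
    · filter_upwards [eventually_ge_atTop 1] with l hl
      have hl1 : (1:ℝ) ≤ (l:ℝ) := by exact_mod_cast hl
      have hsum0 : 0 ≤ ∑ k ∈ Finset.range (l+1), x k := Finset.sum_nonneg fun k _ => hxnn k
      have h1 : (l:ℝ)⁻¹ ≤ 2 * ((l:ℝ)+1)⁻¹ := by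
        rw [inv_eq_one_div, inv_eq_one_div, mul_one_div, div_le_div_iff₀ (by linarith) (by linarith)]
        linarith
      calc (l:ℝ)⁻¹ * ∑ k ∈ Finset.range (l+1), x k
          ≤ (2 * ((l:ℝ)+1)⁻¹) * ∑ k ∈ Finset.range (l+1), x k :=
            mul_le_mul_of_nonneg_right h1 hsum0
        _ = 2 * ((((l+1:ℕ)):ℝ)⁻¹ * ∑ k ∈ Finset.range (l+1), x k) := by push_cast; ring
    · have h2 := (hcesaro.comp (tendsto_add_atTop_nat 1)).const_mul (2:ℝ)
      simpa [Function.comp] using h2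
  -- complex-valued power function
  set F : ℕ → ℂ := fun k => (((k:ℝ) ^ (-s) : ℝ) : ℂ) with hFdef
  have hF1 : F 1 = 1 := by simp [hFdef]
  set G : ℕ → ℂ := fun k => F k - F (k+1) with hGdef
  have hGsub : ∀ k : ℕ, G (k+1) = F (k+1) - F (k+2) := fun k => rfl
  have hGval : ∀ k, G (k+1) = ((s * ξ k ^ (-s-1) : ℝ) : ℂ) := by
    intro k
    have h := hgE k
    rw [hGsub k]
    simp only [hFdef]
    rw [← Complex.ofReal_sub]
    congr 1
    push_cast
    ring_nf
    ring_nf at h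
    linarith [h]
  have hGval2 : ∀ k, G (k+2) = ((s * ξ (k+1) ^ (-s-1) : ℝ) : ℂ) := by
    intro k
    have h := hGval (k+1)
    rwa [show k+1+1 = k+2 from rfl] at h
  have hGnorm : ∀ k, ‖G (k+1)‖ = x k := by
    intro k
    rw [hGval k, Complex.norm_real, Real.norm_eq_abs, abs_mul,
      abs_of_nonneg (Real.rpow_nonneg (hξpos k).le _)]
  have hGnorm2 : ∀ k, ‖G (k+2)‖ = x (k+1) := by
    intro k
    rw [hGval2 k, Complex.norm_real, Real.norm_eq_abs, abs_mul,
      abs_of_nonneg (Real.rpow_nonneg (hξpos (k+1)).le _)]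
  have hGdiffnorm : ∀ k, ‖G (k+2) - G (k+1)‖ = x k - x (k+1) := by
    intro k
    rw [hGval2 k, hGval k, ← Complex.ofReal_sub, Complex.norm_real, Real.norm_eq_abs,
      show s * ξ (k+1) ^ (-s-1) - s * ξ k ^ (-s-1)
        = s * (ξ (k+1) ^ (-s-1) - ξ k ^ (-s-1)) by ring,
      abs_mul, abs_of_nonpos (sub_nonpos.mpr (hudec k))]
    simp only [hxdef]
    ring
  have hFnorm : ∀ k : ℕ, ‖F (k+1)‖ = ((k:ℝ)+1) ^ (-s) := by
    intro k
    simp only [hFdef]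
    rw [Complex.norm_real, Real.norm_eq_abs, abs_of_nonneg (Real.rpow_nonneg (by positivity) _)]
    norm_cast
  -- sequences attached to χ
  set a : ℕ → ℂ := fun k => χ ((k:ℤ) + 1) with hadef
  have haper : ∀ k, a (k + N) = a k := by
    intro k
    simp only [hadef]
    rw [← hper ((k:ℤ) + 1)]
    congr 1
    push_cast
    ring
  set C : ℕ → ℂ := fun m => ∑ k ∈ Finset.range m, a k with hCdef
  have hCsucc : ∀ m, C (m+1) = C m + a m := fun m => Finset.sum_range_succ _ m
  have hCN : ∑ j ∈ Finset.range N, a j = 0 := hsum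
  have hCper : ∀ m, C (m + N) = C m := by
    intro m
    simp only [hCdef]
    rw [Finset.sum_range_add, window_per a N haper m, hCN, add_zero]
  have hNC : (N:ℂ) ≠ 0 := Nat.cast_ne_zero.mpr hN.ne'
  set cb : ℂ := (∑ m ∈ Finset.range N, C (m+1)) / N with hcbdef
  set P : ℕ → ℂ := fun m => C m - cb with hPdef
  have hPsucc : ∀ k, P (k+1) = P k + a k := by
    intro k; simp only [hPdef]; rw [hCsucc k]; ring
  have hP0 : P 0 = -cb := by simp [hPdef, hCdef]
  set Q : ℕ → ℂ := fun m => ∑ j ∈ Finset.range m, P (j+1) with hQdef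
  have hQ0 : Q 0 = 0 := by simp [hQdef]
  have hPQ : ∀ k, Q (k+1) - Q k = P (k+1) := by
    intro k; simp only [hQdef]; rw [Finset.sum_range_succ]; ring
  have hQper : ∀ m, Q (m + N) = Q m := by
    intro m
    simp only [hQdef]
    rw [Finset.sum_range_add]
    have h1 : ∑ j ∈ Finset.range N, P (m + j + 1) = 0 := by
      simp only [hPdef]
      rw [Finset.sum_sub_distrib, Finset.sum_const, Finset.card_range]
      have h3 : ∑ j ∈ Finset.range N, C (m + j + 1) = ∑ j ∈ Finset.range N, C (j + 1) := by
        have hfper : ∀ k, C ((k + N) + 1) = C (k + 1) := by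
          intro k
          have h := hCper (k+1)
          rwa [show k + 1 + N = k + N + 1 by omega] at h
        exact window_per (fun j => C (j + 1)) N hfper m
      rw [h3]
      have h4 : ∑ j ∈ Finset.range N, C (j+1) = (N:ℂ) * cb := by
        rw [hcbdef]; field_simp
      rw [h4]
      simp [nsmul_eq_mul]
    rw [h1, add_zero]
  obtain ⟨MQ, hMQ0, hMQ⟩ := bdd_of_periodic Q N hN hQper
  -- the three pieces
  set S1 : ℕ → ℂ := fun l => ∑ k ∈ Finset.range l, P (k+1) * F (k+1) with hS1def
  set S2 : ℕ → ℂ := fun l => ∑ k ∈ Finset.range l, P (k+1) * G (k+1) with hS2def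
  set S3 : ℕ → ℂ := fun l => ∑ k ∈ Finset.range l, ((k:ℂ)+1) * (P (k+1) * G (k+1)) with hS3def
  set w : ℕ → ℂ := fun k => Q (k+1) * (G (k+2) - G (k+1)) with hwdef
  have habel1 : ∀ l, S1 l = Q l * F (l+1)
      - ∑ k ∈ Finset.range l, Q (k+1) * (F (k+2) - F (k+1)) := by
    intro l
    have h := abel_tele Q F l
    have e : ∑ k ∈ Finset.range l, (Q (k+1) - Q k) * F (k+1) = S1 l :=
      Finset.sum_congr rfl fun k _ => by rw [hPQ k]
    rw [← e, h, hQ0]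
    ring
  have habel2 : ∀ l, S2 l = Q l * G (l+1) - ∑ k ∈ Finset.range l, w k := by
    intro l
    have h := abel_tele Q G l
    have e : ∑ k ∈ Finset.range l, (Q (k+1) - Q k) * G (k+1) = S2 l :=
      Finset.sum_congr rfl fun k _ => by rw [hPQ k]
    have e2 : ∑ k ∈ Finset.range l, Q (k+1) * (G (k+2) - G (k+1))
        = ∑ k ∈ Finset.range l, w k :=
      Finset.sum_congr rfl fun k _ => by simp only [hwdef]
    rw [← e, h, hQ0, e2]
    ring
  have habel3 : ∀ l, S3 l = Q l * (((l+1:ℕ):ℂ) * G (l+1))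
      - ∑ k ∈ Finset.range l, Q (k+1) * (((k+2:ℕ):ℂ) * G (k+2) - ((k+1:ℕ):ℂ) * G (k+1)) := by
    intro l
    have h := abel_tele Q (fun j => (j:ℂ) * G j) l
    have e : ∑ k ∈ Finset.range l, (Q (k+1) - Q k) * (((k+1:ℕ):ℂ) * G (k+1)) = S3 l :=
      Finset.sum_congr rfl fun k _ => by rw [hPQ k]; push_cast; ring
    rw [← e, h, hQ0]
    ring
  -- norm bounds
  have hnorm1 : ∀ l : ℕ, ‖S1 l‖ ≤ MQ * (((l:ℝ)+1) ^ (-s)) + MQ * ∑ k ∈ Finset.range l, x k := by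
    intro l
    rw [habel1 l]
    refine (norm_sub_le _ _).trans (add_le_add ?_ ?_)
    · rw [norm_mul, hFnorm l]
      exact mul_le_mul_of_nonneg_right (hMQ l) (Real.rpow_nonneg (by positivity) _)
    · refine (norm_sum_le _ _).trans ?_
      rw [Finset.mul_sum]
      refine Finset.sum_le_sum fun k _ => ?_
      rw [norm_mul, norm_sub_rev, ← hGsub k, hGnorm k]
      exact mul_le_mul_of_nonneg_right (hMQ (k+1)) (hxnn k)
  have hnorm3 : ∀ l : ℕ, ‖S3 l‖ ≤ MQ * (((l:ℝ)+1) * x l)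
      + MQ * (2 * ∑ k ∈ Finset.range (l+1), x k) := by
    intro l
    rw [habel3 l]
    refine (norm_sub_le _ _).trans (add_le_add ?_ ?_)
    · rw [norm_mul, norm_mul, hGnorm l, RCLike.norm_natCast]
      push_cast
      exact mul_le_mul_of_nonneg_right (hMQ l)
        (mul_nonneg (by positivity) (hxnn l))
    · refine (norm_sum_le _ _).trans ?_
      have hterm : ∀ k ∈ Finset.range l,
          ‖Q (k+1) * (((k+2:ℕ):ℂ) * G (k+2) - ((k+1:ℕ):ℂ) * G (k+1))‖
            ≤ MQ * (((k:ℝ)+1) * (x k - x (k+1)) + x (k+1)) := by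
        intro k _
        rw [norm_mul]
        have hb : ‖((k+2:ℕ):ℂ) * G (k+2) - ((k+1:ℕ):ℂ) * G (k+1)‖
            ≤ ((k:ℝ)+1) * (x k - x (k+1)) + x (k+1) := by
          have e : ((k+2:ℕ):ℂ) * G (k+2) - ((k+1:ℕ):ℂ) * G (k+1)
              = ((k+1:ℕ):ℂ) * (G (k+2) - G (k+1)) + G (k+2) := by push_cast; ring
          rw [e]
          refine (norm_add_le _ _).trans ?_
          rw [norm_mul, hGdiffnorm k, hGnorm2 k, RCLike.norm_natCast]
          push_cast
          exact le_refl _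
        exact mul_le_mul (hMQ (k+1)) hb (norm_nonneg _) hMQ0
      refine (Finset.sum_le_sum hterm).trans ?_
      rw [← Finset.mul_sum]
      refine mul_le_mul_of_nonneg_left ?_ hMQ0
      rw [Finset.sum_add_distrib, tele_weight x l]
      have h5' := Finset.sum_range_succ' x l
      have h6' := Finset.sum_range_succ x l
      have h7 : 0 ≤ (l:ℝ) * x l := mul_nonneg (by positivity) (hxnn l)
      have h8 := hxnn 0
      have h9 := hxnn l
      linarith
  -- summability of the series giving the limit
  have hwsummable : Summable w := by
    apply Summable.of_norm_bounded (g := fun k => MQ * (x k - x (k+1)))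
    · apply summable_of_sum_range_le (c := MQ * x 0)
        (fun n => mul_nonneg hMQ0 (sub_nonneg.2 (hxdec n)))
      intro n
      rw [← Finset.mul_sum, Finset.sum_range_sub' x n]
      exact mul_le_mul_of_nonneg_left (by linarith [hxnn n]) hMQ0
    · intro k
      simp only [hwdef]
      rw [norm_mul, hGdiffnorm k]
      exact mul_le_mul_of_nonneg_right (hMQ (k+1)) (sub_nonneg.2 (hxdec k))
  -- limits of the three pieces
  have hb0 : Tendsto (fun l => Q l * G (l+1)) atTop (𝓝 0) := by
    rw [tendsto_zero_iff_norm_tendsto_zero]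
    have hbb : ∀ l, ‖Q l * G (l+1)‖ ≤ MQ * x l := by
      intro l
      rw [norm_mul, hGnorm l]
      exact mul_le_mul_of_nonneg_right (hMQ l) (hxnn l)
    apply squeeze_zero (fun l => norm_nonneg _) hbb
    simpa using hxto0.const_mul MQ
  have hS2lim : Tendsto S2 atTop (𝓝 (0 - ∑' k, w k)) :=
    (hb0.sub hwsummable.hasSum.tendsto_sum_nat).congr fun l => (habel2 l).symm
  have hS1lim : Tendsto (fun l : ℕ => (1/(l:ℂ)) * S1 l) atTop (𝓝 0) := by
    rw [tendsto_zero_iff_norm_tendsto_zero]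
    apply squeeze_zero'
      (g := fun l : ℕ => MQ * (((l:ℝ)+1) ^ (-s) / l)
        + MQ * ((l:ℝ)⁻¹ * ∑ k ∈ Finset.range l, x k))
    · filter_upwards with l; exact norm_nonneg _
    · filter_upwards with l
      have hnq : ‖(1/(l:ℂ))‖ = 1/(l:ℝ) := by
        rw [norm_div, norm_one, RCLike.norm_natCast]
      rw [norm_mul, hnq]
      calc (1/(l:ℝ)) * ‖S1 l‖
          ≤ (1/(l:ℝ)) * (MQ * (((l:ℝ)+1) ^ (-s)) + MQ * ∑ k ∈ Finset.range l, x k) :=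
            mul_le_mul_of_nonneg_left (hnorm1 l) (by positivity)
        _ = MQ * (((l:ℝ)+1) ^ (-s) / l) + MQ * ((l:ℝ)⁻¹ * ∑ k ∈ Finset.range l, x k) := by
            ring
    · have h := ((tendsto_aux2 s hs).const_mul MQ).add (hcesaro.const_mul MQ)
      simpa using h
  have hsplitr : ∀ l : ℕ, ((l:ℝ)+1) ^ (-s-1) * ((l:ℝ)+1) = ((l:ℝ)+1) ^ (-s) := by
    intro l
    have h := Real.rpow_add (show (0:ℝ) < (l:ℝ)+1 by positivity) (-s-1) 1
    rw [Real.rpow_one] at h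
    rw [← h]
    ring_nf
  have hS3lim : Tendsto (fun l : ℕ => (1/(l:ℂ)) * S3 l) atTop (𝓝 0) := by
    rw [tendsto_zero_iff_norm_tendsto_zero]
    apply squeeze_zero'
      (g := fun l : ℕ => (MQ * |s|) * (((l:ℝ)+1) ^ (-s) / l)
        + (2 * MQ) * ((l:ℝ)⁻¹ * ∑ k ∈ Finset.range (l+1), x k))
    · filter_upwards with l; exact norm_nonneg _
    · filter_upwards with l
      have hnq : ‖(1/(l:ℂ))‖ = 1/(l:ℝ) := by
        rw [norm_div, norm_one, RCLike.norm_natCast]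
      rw [norm_mul, hnq]
      have hx3 : ((l:ℝ)+1) * x l ≤ |s| * (((l:ℝ)+1) ^ (-s)) := by
        calc ((l:ℝ)+1) * x l ≤ ((l:ℝ)+1) * (|s| * (((l:ℝ)+1) ^ (-s-1))) :=
              mul_le_mul_of_nonneg_left (hxle l) (by positivity)
          _ = |s| * (((l:ℝ)+1) ^ (-s-1) * ((l:ℝ)+1)) := by ring
          _ = |s| * (((l:ℝ)+1) ^ (-s)) := by rw [hsplitr l]
      calc (1/(l:ℝ)) * ‖S3 l‖
          ≤ (1/(l:ℝ)) * (MQ * (((l:ℝ)+1) * x l)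
              + MQ * (2 * ∑ k ∈ Finset.range (l+1), x k)) :=
            mul_le_mul_of_nonneg_left (hnorm3 l) (by positivity)
        _ ≤ (1/(l:ℝ)) * (MQ * (|s| * (((l:ℝ)+1) ^ (-s)))
              + MQ * (2 * ∑ k ∈ Finset.range (l+1), x k)) := by
            have := mul_le_mul_of_nonneg_left hx3 hMQ0
            have h0 : (0:ℝ) ≤ 1/(l:ℝ) := by positivity
            nlinarith
        _ = (MQ * |s|) * (((l:ℝ)+1) ^ (-s) / l)
              + (2 * MQ) * ((l:ℝ)⁻¹ * ∑ k ∈ Finset.range (l+1), x k) := by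
            ring
    · have h := ((tendsto_aux2 s hs).const_mul (MQ * |s|)).add (hcesaro'.const_mul (2 * MQ))
      simpa using h
  -- master identity
  have hT : ∀ l : ℕ,
      (∑ k ∈ Finset.range l, ((l : ℂ) + 1 - ((k : ℂ) + 1)) * χ (k + 1)
          * (((((k : ℝ) + 1) ^ (-s) : ℝ)) : ℂ))
        = (l:ℂ) * cb + S1 l + ((l:ℂ) * S2 l - S3 l) := by
    intro l
    have e0 : (∑ k ∈ Finset.range l, ((l : ℂ) + 1 - ((k : ℂ) + 1)) * χ (k + 1)
          * (((((k : ℝ) + 1) ^ (-s) : ℝ)) : ℂ))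
        = ∑ k ∈ Finset.range l, ((l:ℂ) + 1 - ((k:ℂ)+1)) * a k * F (k+1) := by
      refine Finset.sum_congr rfl fun k _ => ?_
      simp only [hadef, hFdef]
      norm_cast
    have hm := masterId a P F cb hPsucc hP0 hF1 l
    have e1 : ∑ k ∈ Finset.range l, ((l:ℂ) - ((k:ℂ)+1)) * (P (k+1) * (F (k+1) - F (k+2)))
        = (l:ℂ) * S2 l - S3 l := by
      have e2 : ∀ k ∈ Finset.range l,
          ((l:ℂ) - ((k:ℂ)+1)) * (P (k+1) * (F (k+1) - F (k+2)))
            = (l:ℂ) * (P (k+1) * G (k+1)) - ((k:ℂ)+1) * (P (k+1) * G (k+1)) := by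
        intro k _
        rw [hGsub k]
        ring
      rw [Finset.sum_congr rfl e2, Finset.sum_sub_distrib, ← Finset.mul_sum]
    rw [e0, hm, e1]
  refine ⟨cb + 0 + (0 - ∑' k, w k) - 0, ?_⟩
  have hconst : Tendsto (fun _ : ℕ => cb) atTop (𝓝 cb) := tendsto_const_nhds
  have hfinal := ((hconst.add hS1lim).add hS2lim).sub hS3lim
  refine Tendsto.congr' ?_ hfinal
  filter_upwards [eventually_ge_atTop 1] with l hl
  have hl0 : (l:ℂ) ≠ 0 := Nat.cast_ne_zero.mpr (by omega)
  rw [hT l]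
  field_simp
  ring
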